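/- arXiv:1001.1279 — 2 statements merged into one kernel-verified Lean document; each statement's English description precedes it below -/
import Mathlib

section
/- Let X be a proper metric space, let γ : [0,∞) → X be a ray with Busemann function F_γ, let q ∈ X, and let t_i → ∞ be a divergent sequence. Suppose that for each i, σ_i : [0, d(q, γ(t_i))] → X is a minimal geodesic segment (an isometric embedding) with σ_i(0) = q and σ_i(d(q,γ(t_i))) = γ(t_i), and suppose the maps σ_i converge pointwise (uniformly on compact subsets) to a ray σ : [0,∞) → X with σ(0) = q. Then F_γ(σ(s)) = F_γ(q) + s for all s ≥ 0. -/
open Filter Set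

/-- Proposition 3.3 (metric-space content): if `σ` is a ray emanating from `q`
obtained as a limit of minimal geodesic segments from `q` to `γ(t_i)` for a
divergent sequence `t_i → ∞`, then the Busemann function `F_γ` increases at unit
speed along `σ`, i.e. `F_γ(σ(s)) = F_γ(q) + s` for all `s ≥ 0`. -/
theorem busemann_along_asymptotic_ray
    {X : Type*} [MetricSpace X] [ProperSpace X] (γ : ℝ → X)
    (hray : ∀ s t : ℝ, 0 ≤ s → 0 ≤ t → dist (γ s) (γ t) = |s - t|)
    (F : X → ℝ)
    (hF : ∀ x : X, Tendsto (fun t : ℝ => t - dist x (γ t)) atTop (nhds (F x)))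
    (q : X) (ti : ℕ → ℝ) (hti : Tendsto ti atTop atTop)
    (σi : ℕ → ℝ → X)
    (hσi_seg : ∀ i : ℕ, ∀ s t : ℝ, s ∈ Icc 0 (dist q (γ (ti i))) →
      t ∈ Icc 0 (dist q (γ (ti i))) → dist (σi i s) (σi i t) = |s - t|)
    (hσi_start : ∀ i : ℕ, σi i 0 = q)
    (hσi_end : ∀ i : ℕ, σi i (dist q (γ (ti i))) = γ (ti i))
    (σ : ℝ → X) (hσ_start : σ 0 = q)
    (hσ_ray : ∀ s t : ℝ, 0 ≤ s → 0 ≤ t → dist (σ s) (σ t) = |s - t|)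
    (hconv : ∀ s : ℝ, 0 ≤ s → Tendsto (fun i : ℕ => σi i s) atTop (nhds (σ s))) :
    ∀ s : ℝ, 0 ≤ s → F (σ s) = F q + s := by
  intro s hs
  -- `F x ≥ t - dist x (γ t)` for all `t ≥ 0` (monotonicity in `t`)
  have hkey : ∀ x : X, ∀ t : ℝ, 0 ≤ t → t - dist x (γ t) ≤ F x := by
    intro x t ht
    refine ge_of_tendsto (hF x) ?_
    filter_upwards [eventually_ge_atTop t] with t' ht'
    have h1 : dist x (γ t') ≤ dist x (γ t) + dist (γ t) (γ t') := dist_triangle _ _ _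
    have h2 : dist (γ t) (γ t') = |t - t'| := hray t t' ht (ht.trans ht')
    rw [abs_sub_comm] at h2
    rw [abs_of_nonneg (by linarith)] at h2
    linarith
  have hs_dist : dist q (σ s) = s := by
    rw [← hσ_start, hσ_ray 0 s le_rfl hs]
    simp [abs_of_nonneg hs]
  -- Upper bound
  have hub : F (σ s) ≤ F q + s := by
    have h2 : Tendsto (fun t : ℝ => (t - dist q (γ t)) + s) atTop (nhds (F q + s)) :=
      (hF q).add_const s
    refine le_of_tendsto_of_tendsto (hF (σ s)) h2 ?_
    filter_upwards with t
    show t - dist (σ s) (γ t) ≤ t - dist q (γ t) + s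
    have h1 := dist_triangle q (σ s) (γ t)
    rw [hs_dist] at h1
    linarith
  -- Lower bound
  have hd0 : Tendsto (fun i : ℕ => dist (σ s) (σi i s)) atTop (nhds 0) := by
    have := tendsto_iff_dist_tendsto_zero.mp (hconv s hs)
    simpa [dist_comm] using this
  have hlim : Tendsto (fun i : ℕ => ti i - dist q (γ (ti i)) + s - dist (σ s) (σi i s))
      atTop (nhds (F q + s)) := by
    have := (((hF q).comp hti).add_const s).sub hd0
    simpa using this
  have hlb : F q + s ≤ F (σ s) := by
    refine le_of_tendsto hlim ?_
    have hev : ∀ᶠ i in atTop, s + dist q (γ 0) ≤ ti i := hti.eventually (eventually_ge_atTop _)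
    filter_upwards [hev] with i hi
    have hti0 : (0:ℝ) ≤ ti i := by linarith [dist_nonneg (x := q) (y := γ 0)]
    have hDs : s ≤ dist q (γ (ti i)) := by
      have h1 : dist (γ 0) (γ (ti i)) = ti i := by
        rw [hray 0 (ti i) le_rfl hti0]; simp [abs_of_nonneg hti0]
      have h2 := dist_triangle (γ 0) q (γ (ti i))
      rw [h1, dist_comm (γ 0) q] at h2
      linarith
    have hD0 : (0:ℝ) ≤ dist q (γ (ti i)) := dist_nonneg
    have hseg : dist (σi i s) (γ (ti i)) = dist q (γ (ti i)) - s := by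
      have h := hσi_seg i s (dist q (γ (ti i))) ⟨hs, hDs⟩ ⟨hD0, le_rfl⟩
      rw [hσi_end i] at h
      rw [h, abs_of_nonpos (by linarith)]
      ring
    have htri : dist (σ s) (γ (ti i)) ≤ dist (σ s) (σi i s) + dist (σi i s) (γ (ti i)) :=
      dist_triangle _ _ _
    have hk := hkey (σ s) (ti i) hti0
    show ti i - dist q (γ (ti i)) + s - dist (σ s) (σi i s) ≤ F (σ s)
    rw [hseg] at htri
    linarith
  linarith
end

section
/- Let X be a proper metric space that contains no straight line, i.e. no map γ : ℝ → X with d(γ(s),γ(t)) = |s−t| for all s,t ∈ ℝ. Then for every p ∈ X and every r₁ > 0 there exists r₂ > r₁ such that every ray γ : [0,∞) → X emanating from a point γ(0) with d(p, γ(0)) ≥ r₂ satisfies d(p, γ(t)) ≥ r₁ for all t ≥ 0; that is, no ray emanating from a point outside the ball B(p, r₂) passes through the ball B(p, r₁). -/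
open Set Filter Metric Topology

/-- Lemma 2.2 (metric-space content): in a proper metric space containing no
straight line, for every point `p` and every `r₁ > 0` there exists `r₂ > r₁` such
that no ray emanating from a point outside the ball `B(p, r₂)` passes through the
ball `B(p, r₁)`. -/
theorem rays_avoid_ball_of_no_line
    {X : Type*} [MetricSpace X] [ProperSpace X]
    (hnoline : ¬ ∃ γ : ℝ → X, ∀ s t : ℝ, dist (γ s) (γ t) = |s - t|) :
    ∀ p : X, ∀ r₁ : ℝ, 0 < r₁ → ∃ r₂ : ℝ, r₁ < r₂ ∧
      ∀ γ : ℝ → X, (∀ s t : ℝ, 0 ≤ s → 0 ≤ t → dist (γ s) (γ t) = |s - t|) →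
        r₂ ≤ dist p (γ 0) → ∀ t : ℝ, 0 ≤ t → r₁ ≤ dist p (γ t) := by
  intro p r₁ hr₁
  by_contra hcon
  push_neg at hcon
  have hsel : ∀ n : ℕ, ∃ γ : ℝ → X,
      (∀ s t : ℝ, 0 ≤ s → 0 ≤ t → dist (γ s) (γ t) = |s - t|) ∧
      (r₁ + n + 1 ≤ dist p (γ 0)) ∧ ∃ t, 0 ≤ t ∧ dist p (γ t) < r₁ := by
    intro n
    have hlt : r₁ < r₁ + n + 1 := by
      have : (0:ℝ) ≤ n := Nat.cast_nonneg n
      linarith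
    obtain ⟨g, h1, h2, t, ht, hdlt⟩ := hcon (r₁ + n + 1) hlt
    exact ⟨g, h1, h2, t, ht, hdlt⟩
  choose γ hiso h0 T hT hTlt using hsel
  have hTbig : ∀ n : ℕ, (n : ℝ) < T n := by
    intro n
    have hd : dist (γ n (T n)) (γ n 0) = T n := by
      rw [hiso n (T n) 0 (hT n) le_rfl, sub_zero, abs_of_nonneg (hT n)]
    have htri := dist_triangle p (γ n (T n)) (γ n 0)
    have h0n := h0 n
    have hlt := hTlt n
    linarith
  have hT0 : ∀ n : ℕ, 0 ≤ T n := fun n =>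
    le_of_lt (lt_of_le_of_lt (Nat.cast_nonneg n) (hTbig n))
  set f : ℕ → ℝ → X := fun n s => γ n (max (T n + s) 0) with hf
  have hev : ∀ s : ℝ, ∀ᶠ n : ℕ in atTop, 0 ≤ T n + s := by
    intro s
    filter_upwards [(tendsto_natCast_atTop_atTop (R := ℝ)).eventually_ge_atTop (-s)]
      with n hn
    linarith [hTbig n]
  have hball : ∀ s : ℝ, ∀ᶠ n : ℕ in atTop, f n s ∈ closedBall p (r₁ + |s|) := by
    intro s
    filter_upwards [hev s] with n hn
    have hmax : max (T n + s) 0 = T n + s := max_eq_left hn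
    have hd : dist (γ n (T n)) (γ n (T n + s)) = |s| := by
      rw [hiso n (T n) (T n + s) (hT0 n) hn, show T n - (T n + s) = -s by ring, abs_neg]
    have htri := dist_triangle p (γ n (T n)) (γ n (T n + s))
    have hlt := hTlt n
    simp only [hf, hmax, mem_closedBall]
    rw [dist_comm]
    linarith
  have hdist : ∀ s t : ℝ, ∀ᶠ n : ℕ in atTop, dist (f n s) (f n t) = |s - t| := by
    intro s t
    filter_upwards [hev s, hev t] with n hs ht
    simp only [hf, max_eq_left hs, max_eq_left ht]
    rw [hiso n (T n + s) (T n + t) hs ht]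
    congr 1; ring
  -- ultrafilter limit
  let U : Ultrafilter ℕ := Ultrafilter.of atTop
  have hU : (U : Filter ℕ) ≤ atTop := Ultrafilter.of_le _
  have hex : ∀ s : ℝ, ∃ x : X, Tendsto (fun n => f n s) (U : Filter ℕ) (𝓝 x) := by
    intro s
    have hmem : ∀ᶠ n : ℕ in (U : Filter ℕ), f n s ∈ closedBall p (r₁ + |s|) :=
      (hball s).filter_mono hU
    have hle : (U.map (fun n => f n s) : Filter X) ≤ 𝓟 (closedBall p (r₁ + |s|)) := by
      rw [le_principal_iff]
      exact hmem
    obtain ⟨x, _, hx⟩ :=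
      (isCompact_closedBall p (r₁ + |s|)).ultrafilter_le_nhds
        (U.map (fun n => f n s)) hle
    exact ⟨x, hx⟩
  choose L hL using hex
  apply hnoline
  refine ⟨L, fun s t => ?_⟩
  have h1 : Tendsto (fun n => dist (f n s) (f n t)) (U : Filter ℕ)
      (𝓝 (dist (L s) (L t))) := (hL s).dist (hL t)
  have h2 : Tendsto (fun n => dist (f n s) (f n t)) (U : Filter ℕ) (𝓝 (|s - t|)) := by
    refine Tendsto.congr' ?_ tendsto_const_nhds
    exact (((hdist s t).filter_mono hU).mono fun n hn => hn.symm)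
  exact tendsto_nhds_unique h1 h2
end
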